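/- For the same chain (Student-t Gibbs sampler with t ≥ 4, s² = t), for each fixed μ' the map μ ↦ p(μ'|μ) on [0,a] attains its minimum at μ = 0 or μ = a; specifically p(μ'|0) < p(μ'|a) if and only if |μ'| > h(a), where h(a) = { a² [ (1 + a²/t)^{t/(t+1)} − 1 ]^{−1} − t }^{1/2}. Consequently min_{|μ|≤a} p(μ'|μ) = p(μ'|a) for |μ'| ≤ h(a) and = p(μ'|0) for |μ'| > h(a). -/

import Mathlib

open MeasureTheory Real

noncomputable section

/-- Normalizing constant of the Student-t type transition density. -/
def studentC (t : ℝ) : ℝ :=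
  Real.Gamma ((t + 1) / 2) / (Real.sqrt (t * Real.pi) * Real.Gamma (t / 2))

/-- The transition density `p(μ'|μ)` of the two-step Gibbs sampler (with `s² = t`):
`p(μ'|μ) ∝ (1 + μ²/t)^{t/2} (1 + μ²/t + μ'²/t)^{−(t+1)/2}`. -/
def pdens (t μ μ' : ℝ) : ℝ :=
  studentC t * (1 + μ ^ 2 / t) ^ (t / 2) * (1 + μ ^ 2 / t + μ' ^ 2 / t) ^ (-(t + 1) / 2)

/-- The threshold `h(a)`. -/
def hthresh (t a : ℝ) : ℝ :=
  Real.sqrt (a ^ 2 * ((1 + a ^ 2 / t) ^ (t / (t + 1)) - 1)⁻¹ - t)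

lemma sg_hasDeriv (t b : ℝ) {z : ℝ} (hz : 0 < z) (hb : 0 ≤ b) :
    HasDerivAt (fun x : ℝ => x ^ (t/2) * (x+b) ^ (-(t+1)/2))
      (z ^ (t/2-1) * (z+b) ^ (-(t+1)/2-1) * ((t*b - z)/2)) z := by
  have hzb : 0 < z + b := by linarith
  have h1 : HasDerivAt (fun x : ℝ => x ^ (t/2)) (t/2 * z ^ (t/2-1)) z :=
    Real.hasDerivAt_rpow_const (Or.inl hz.ne')
  have h2 : HasDerivAt (fun x : ℝ => (x+b) ^ (-(t+1)/2)) (-(t+1)/2 * (z+b) ^ (-(t+1)/2-1)) z := by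
    have hr : HasDerivAt (fun y : ℝ => y ^ (-(t+1)/2)) (-(t+1)/2 * (z+b) ^ (-(t+1)/2-1)) (z+b) :=
      Real.hasDerivAt_rpow_const (Or.inl hzb.ne')
    have hadd : HasDerivAt (fun x : ℝ => x + b) 1 z := (hasDerivAt_id z).add_const b
    have hc := hr.comp z hadd
    rw [mul_one] at hc
    exact hc
  have h := h1.mul h2
  refine HasDerivAt.congr_deriv h ?_
  have e1 : z ^ (t/2) = z ^ (t/2-1) * z := by
    rw [← Real.rpow_add_one hz.ne']; ring_nf
  have e2 : (z+b) ^ (-(t+1)/2) = (z+b) ^ (-(t+1)/2-1) * (z+b) := by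
    rw [← Real.rpow_add_one hzb.ne']; ring_nf
  rw [e1, e2]; ring

lemma sg_mono (t b : ℝ) (hb : 0 ≤ b) {x y : ℝ} (hx : 0 < x) (hxy : x ≤ y) (hy : y ≤ t * b) :
    x ^ (t/2) * (x+b) ^ (-(t+1)/2) ≤ y ^ (t/2) * (y+b) ^ (-(t+1)/2) := by
  have hcont : ContinuousOn (fun x : ℝ => x ^ (t/2) * (x+b) ^ (-(t+1)/2)) (Set.Icc x y) := by
    apply ContinuousOn.mul
    · exact (continuousOn_id).rpow_const (fun z hz => Or.inl (by simp; nlinarith [hz.1]))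
    · exact ((continuousOn_id).add continuousOn_const).rpow_const
        (fun z hz => Or.inl (by simp; nlinarith [hz.1]))
  have key : ∀ z ∈ interior (Set.Icc x y), 0 < z ∧ z ≤ t * b := by
    intro z hz
    rw [interior_Icc] at hz
    exact ⟨hx.trans hz.1, le_of_lt (lt_of_lt_of_le hz.2 hy)⟩
  have hmono : MonotoneOn (fun x : ℝ => x ^ (t/2) * (x+b) ^ (-(t+1)/2)) (Set.Icc x y) := by
    apply monotoneOn_of_deriv_nonneg (convex_Icc x y) hcont
    · intro z hz
      exact ((sg_hasDeriv t b (key z hz).1 hb).differentiableAt).differentiableWithinAt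
    · intro z hz
      rw [(sg_hasDeriv t b (key z hz).1 hb).deriv]
      have h1 := (key z hz).1
      have h2 := (key z hz).2
      have hzb : (0:ℝ) < z + b := by linarith
      have p1 : (0:ℝ) < z ^ (t/2-1) := Real.rpow_pos_of_pos h1 _
      have p2 : (0:ℝ) < (z+b) ^ (-(t+1)/2-1) := Real.rpow_pos_of_pos hzb _
      have p3 : (0:ℝ) ≤ (t*b - z)/2 := by linarith
      positivity
  exact hmono (Set.left_mem_Icc.mpr hxy) (Set.right_mem_Icc.mpr hxy) hxy

lemma sg_anti (t b : ℝ) (hb : 0 ≤ b) {x y : ℝ} (hx : 0 < x) (hxy : x ≤ y) (htb : t * b ≤ x) :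
    y ^ (t/2) * (y+b) ^ (-(t+1)/2) ≤ x ^ (t/2) * (x+b) ^ (-(t+1)/2) := by
  have hcont : ContinuousOn (fun x : ℝ => x ^ (t/2) * (x+b) ^ (-(t+1)/2)) (Set.Icc x y) := by
    apply ContinuousOn.mul
    · exact (continuousOn_id).rpow_const (fun z hz => Or.inl (by simp; nlinarith [hz.1]))
    · exact ((continuousOn_id).add continuousOn_const).rpow_const
        (fun z hz => Or.inl (by simp; nlinarith [hz.1]))
  have key : ∀ z ∈ interior (Set.Icc x y), 0 < z ∧ t * b ≤ z := by
    intro z hz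
    rw [interior_Icc] at hz
    exact ⟨hx.trans hz.1, le_of_lt (lt_of_le_of_lt htb hz.1)⟩
  have hanti : AntitoneOn (fun x : ℝ => x ^ (t/2) * (x+b) ^ (-(t+1)/2)) (Set.Icc x y) := by
    apply antitoneOn_of_deriv_nonpos (convex_Icc x y) hcont
    · intro z hz
      exact ((sg_hasDeriv t b (key z hz).1 hb).differentiableAt).differentiableWithinAt
    · intro z hz
      rw [(sg_hasDeriv t b (key z hz).1 hb).deriv]
      have h1 := (key z hz).1
      have h2 := (key z hz).2
      have hzb : (0:ℝ) < z + b := by linarith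
      have p1 : (0:ℝ) < z ^ (t/2-1) := Real.rpow_pos_of_pos h1 _
      have p2 : (0:ℝ) < (z+b) ^ (-(t+1)/2-1) := Real.rpow_pos_of_pos hzb _
      have p3 : (t*b - z)/2 ≤ 0 := by linarith
      exact mul_nonpos_of_nonneg_of_nonpos (le_of_lt (mul_pos p1 p2)) p3
  exact hanti (Set.left_mem_Icc.mpr hxy) (Set.right_mem_Icc.mpr hxy) hxy

lemma sg_C_pos (t : ℝ) (ht0 : 0 < t) : 0 < studentC t := by
  unfold studentC
  have h1 : 0 < Real.Gamma ((t+1)/2) := Real.Gamma_pos_of_pos (by linarith)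
  have h2 : 0 < Real.Gamma (t/2) := Real.Gamma_pos_of_pos (by linarith)
  have h3 : 0 < Real.sqrt (t*Real.pi) := Real.sqrt_pos.mpr (mul_pos ht0 Real.pi_pos)
  positivity

lemma sg_core (t X b q : ℝ) (ht0 : 0 < t) (hX : 1 < X) (hb : 0 ≤ b)
    (hq : q = X ^ (t/(t+1))) :
    (1:ℝ)^(t/2) * (1+b) ^ (-(t+1)/2) < X ^ (t/2) * (X+b) ^ (-(t+1)/2) ↔ X - q < b * (q - 1) := by
  have ht1 : (0:ℝ) < t+1 := by linarith
  have hX0 : (0:ℝ) < X := by linarith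
  have hA : (0:ℝ) < 1 + b := by linarith
  have hB : (0:ℝ) < X + b := by linarith
  have hp : (0:ℝ) < (t+1)/2 := by linarith
  have e : (-(t+1)/2 : ℝ) = -((t+1)/2) := by ring
  rw [Real.one_rpow, one_mul, e, Real.rpow_neg hA.le, Real.rpow_neg hB.le]
  have hAp : 0 < (1+b)^((t+1)/2) := Real.rpow_pos_of_pos hA _
  have hBp : 0 < (X+b)^((t+1)/2) := Real.rpow_pos_of_pos hB _
  rw [show X^(t/2) * ((X+b)^((t+1)/2))⁻¹ = X^(t/2)/((X+b)^((t+1)/2)) from (div_eq_mul_inv _ _).symm,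
      show ((1+b)^((t+1)/2))⁻¹ = 1/((1+b)^((t+1)/2)) from (one_div _).symm,
      div_lt_div_iff₀ hAp hBp, one_mul]
  have hXq : X ^ (t/2) = q ^ ((t+1)/2) := by
    rw [hq, ← Real.rpow_mul hX0.le]
    congr 1
    field_simp
  have hq0 : (0:ℝ) ≤ q := by rw [hq]; positivity
  rw [hXq, ← Real.mul_rpow hq0 hA.le, Real.rpow_lt_rpow_iff hB.le (by positivity) hp]
  constructor <;> intro h <;> nlinarith

lemma sg_part1 (t a : ℝ) (ht : 4 ≤ t) (ha : 0 < a) (μ' : ℝ) :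
    pdens t 0 μ' < pdens t a μ' ↔ hthresh t a < |μ'| := by
  have ht0 : (0:ℝ) < t := by linarith
  have ht1 : (0:ℝ) < t+1 := by linarith
  have hb : (0:ℝ) ≤ μ'^2/t := by positivity
  have hX : (1:ℝ) < 1 + a^2/t := by
    have : (0:ℝ) < a^2/t := by positivity
    linarith
  have hX0 : (0:ℝ) < 1 + a^2/t := by linarith
  have hq1 : (1:ℝ) < (1 + a^2/t) ^ (t/(t+1)) :=
    (Real.one_lt_rpow_iff_of_pos hX0).mpr (Or.inl ⟨hX, by positivity⟩)
  have hqX : (1 + a^2/t) ^ (t/(t+1)) ≤ 1 + a^2/t := by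
    have h := Real.rpow_le_rpow_of_exponent_le hX.le
      (show t/(t+1) ≤ 1 from (div_le_one ht1).mpr (by linarith))
    simpa using h
  set q := (1 + a^2/t) ^ (t/(t+1)) with hqdef
  have hq1' : (0:ℝ) < q - 1 := by linarith
  have hceq : a^2 * (q-1)⁻¹ - t = t * ((1 + a^2/t) - q) / (q - 1) := by
    have ha2 : a^2 = t * ((1 + a^2/t) - 1) := by field_simp; ring
    rw [inv_eq_one_div, eq_div_iff hq1'.ne']
    field_simp
    ring
  have hc0 : (0:ℝ) ≤ a^2 * (q-1)⁻¹ - t := by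
    rw [hceq]
    apply div_nonneg _ hq1'.le
    have : (0:ℝ) ≤ (1 + a^2/t) - q := by linarith
    positivity
  have e0 : pdens t 0 μ' = studentC t * ((1:ℝ)^(t/2) * (1+μ'^2/t)^(-(t+1)/2)) := by
    simp [pdens, mul_assoc]
  have ea : pdens t a μ' = studentC t * ((1+a^2/t)^(t/2) * ((1+a^2/t)+μ'^2/t)^(-(t+1)/2)) := by
    simp only [pdens, mul_assoc]
  have hthr : hthresh t a = Real.sqrt (a^2 * (q-1)⁻¹ - t) := rfl
  rw [e0, ea, mul_lt_mul_iff_right₀ (sg_C_pos t ht0),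
      sg_core t (1+a^2/t) (μ'^2/t) q ht0 hX hb hqdef, hthr, ← Real.sqrt_sq_eq_abs,
      Real.sqrt_lt_sqrt_iff hc0]
  have hμt : μ'^2 = (μ'^2/t)*t := (div_mul_cancel₀ _ ht0.ne').symm
  constructor
  · intro h
    rw [hceq, div_lt_iff₀ hq1']
    nlinarith [mul_lt_mul_of_pos_left h ht0]
  · intro h
    rw [hceq, div_lt_iff₀ hq1'] at h
    nlinarith

lemma sg_part2 (t a : ℝ) (ht : 4 ≤ t) (ha : 0 < a) (μ' μ : ℝ) (hμ : |μ| ≤ a) :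
    min (pdens t 0 μ') (pdens t a μ') ≤ pdens t μ μ' := by
  have ht0 : (0:ℝ) < t := by linarith
  have hb : (0:ℝ) ≤ μ'^2/t := by positivity
  have hC : 0 ≤ studentC t := (sg_C_pos t ht0).le
  have hx1 : (1:ℝ) ≤ 1 + μ^2/t := by
    have : (0:ℝ) ≤ μ^2/t := by positivity
    linarith
  have hμ2 : μ^2 ≤ a^2 := sq_le_sq' (by linarith [(abs_le.mp hμ).1]) (abs_le.mp hμ).2
  have hxX : 1 + μ^2/t ≤ 1 + a^2/t := by
    have : μ^2/t ≤ a^2/t := by gcongr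
    linarith
  have e0 : pdens t 0 μ' = studentC t * ((1:ℝ)^(t/2) * (1+μ'^2/t)^(-(t+1)/2)) := by
    simp [pdens, mul_assoc]
  have ea : pdens t a μ' = studentC t * ((1+a^2/t)^(t/2) * ((1+a^2/t)+μ'^2/t)^(-(t+1)/2)) := by
    simp only [pdens, mul_assoc]
  have eμ : pdens t μ μ' = studentC t * ((1+μ^2/t)^(t/2) * ((1+μ^2/t)+μ'^2/t)^(-(t+1)/2)) := by
    simp only [pdens, mul_assoc]
  rcases le_or_gt (1 + μ^2/t) (t * (μ'^2/t)) with hcase | hcase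
  · refine le_trans (min_le_left _ _) ?_
    rw [e0, eμ]
    have h := sg_mono t (μ'^2/t) hb one_pos hx1 hcase
    rw [Real.one_rpow] at h ⊢
    exact mul_le_mul_of_nonneg_left (by simpa using h) hC
  · refine le_trans (min_le_right _ _) ?_
    rw [ea, eμ]
    have h := sg_anti t (μ'^2/t) hb (lt_of_lt_of_le one_pos hx1) hxX hcase.le
    exact mul_le_mul_of_nonneg_left h hC

/-- **Minorization for the Student-t Gibbs sampler (Proposition 6.2).** For `t ≥ 4`,
`s² = t` and `a > 0`: for each fixed `μ'` the map `μ ↦ p(μ'|μ)` on `[−a, a]` attains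
its minimum at `μ = 0` or `μ = a`; moreover `p(μ'|0) < p(μ'|a)` iff `|μ'| > h(a)`.
Consequently `min_{|μ|≤a} p(μ'|μ) = p(μ'|a)` for `|μ'| ≤ h(a)` and `= p(μ'|0)` for
`|μ'| > h(a)`. -/
theorem student_gibbs_minorization (t a : ℝ) (ht : 4 ≤ t) (ha : 0 < a) :
    (∀ μ' : ℝ, pdens t 0 μ' < pdens t a μ' ↔ hthresh t a < |μ'|)
    ∧ (∀ μ' μ : ℝ, |μ| ≤ a → min (pdens t 0 μ') (pdens t a μ') ≤ pdens t μ μ')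
    ∧ (∀ μ' μ : ℝ, |μ| ≤ a →
        (|μ'| ≤ hthresh t a → pdens t a μ' ≤ pdens t μ μ')
        ∧ (hthresh t a < |μ'| → pdens t 0 μ' ≤ pdens t μ μ')) := by
  refine ⟨sg_part1 t a ht ha, sg_part2 t a ht ha, fun μ' μ hμ => ⟨?_, ?_⟩⟩
  · intro hle
    have hnot : ¬ (pdens t 0 μ' < pdens t a μ') := by
      rw [sg_part1 t a ht ha]
      exact not_lt.mpr hle
    have := sg_part2 t a ht ha μ' μ hμ
    rwa [min_eq_right (not_lt.mp hnot)] at this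
  · intro hlt
    have hlt' : pdens t 0 μ' < pdens t a μ' := (sg_part1 t a ht ha μ').mpr hlt
    have := sg_part2 t a ht ha μ' μ hμ
    rwa [min_eq_left hlt'.le] at this

end
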